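/- Let g = [[a,b],[c,d]] be a real 2×2 matrix with det g = 1 and d ≠ 0, acting on the upper half-plane by g·z = (az + b)/(cz + d), and let P_ℍ(z, x') := Im(z)/|z − x'|² denote the Poisson kernel of the upper half-plane (z in the upper half-plane, x' ∈ ℝ). Then P_ℍ(g·i, g·0) = d². Consequently, with X = [[1/2,0],[0,-1/2]] and U₋ = [[0,0],[1,0]] and exp the matrix exponential: d/dt|_{t=0} P_ℍ(g·exp(tX)·i, g·exp(tX)·0) = −d² (the function Φ₋(g) := P_ℍ(g·i, g·0) satisfies XΦ₋ = −Φ₋), and d/dt|_{t=0} P_ℍ(g·exp(tU₋)·i, g·exp(tU₋)·0) = 0 (i.e. U₋Φ₋ = 0). -/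

import Mathlib

open Complex

/-- The Möbius action of a real 2×2 matrix on ℂ: `g·z = (az + b)/(cz + d)`. -/
noncomputable def moebAct (g : Matrix (Fin 2) (Fin 2) ℝ) (z : ℂ) : ℂ :=
  ((g 0 0 : ℂ) * z + (g 0 1 : ℂ)) / ((g 1 0 : ℂ) * z + (g 1 1 : ℂ))

/-- The Poisson kernel of the upper half-plane: `P_ℍ(z, w) = Im z / |z − w|²`. -/
noncomputable def PH (z w : ℂ) : ℝ := z.im / ‖z - w‖ ^ 2

/-- `X = [[1/2,0],[0,-1/2]]`. -/
noncomputable def Xr : Matrix (Fin 2) (Fin 2) ℝ := !![1/2, 0; 0, -(1/2)]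

/-- `U₋ = [[0,0],[1,0]]`. -/
noncomputable def Umr : Matrix (Fin 2) (Fin 2) ℝ := !![0, 0; 1, 0]

lemma PH_key (a b c d : ℝ) (h : a * d - b * c = 1) (hd : d ≠ 0) :
    PH (((a:ℂ) * I + b) / ((c:ℂ) * I + d)) ((b:ℂ)/d) = d ^ 2 := by
  have hd' : (d:ℂ) ≠ 0 := by exact_mod_cast hd
  have hw : (c:ℂ) * I + d ≠ 0 := by
    intro h0
    apply hd
    have := congrArg Complex.re h0
    simpa using this
  have hc : (a:ℂ) * d - b * c = 1 := by exact_mod_cast h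
  have hsum : c ^ 2 + d ^ 2 ≠ 0 := by positivity
  have hre1 : ((a:ℂ) * I + b).re = b := by simp
  have him1 : ((a:ℂ) * I + b).im = a := by simp
  have hre2 : ((c:ℂ) * I + d).re = d := by simp
  have him2 : ((c:ℂ) * I + d).im = c := by simp
  have hnsq : Complex.normSq ((c:ℂ) * I + d) = c ^ 2 + d ^ 2 := by
    rw [Complex.normSq_apply, hre2, him2]; ring
  have him : (((a:ℂ) * I + b) / ((c:ℂ) * I + d)).im = 1 / (c ^ 2 + d ^ 2) := by
    rw [Complex.div_im, hre1, him1, hre2, him2, hnsq, div_sub_div_same, h]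
  have hdiff : ((a:ℂ) * I + b) / ((c:ℂ) * I + d) - (b:ℂ)/d = I / (((c:ℂ) * I + d) * d) := by
    rw [div_sub_div _ _ hw hd']
    congr 1
    linear_combination I * hc
  have hnorm : ‖((a:ℂ) * I + b) / ((c:ℂ) * I + d) - (b:ℂ)/d‖ ^ 2
      = 1 / ((c ^ 2 + d ^ 2) * d ^ 2) := by
    rw [hdiff, norm_div, div_pow, Complex.sq_norm,
      Complex.sq_norm, Complex.normSq_mul, hnsq, Complex.normSq_ofReal, Complex.normSq_I]
    ring_nf
  rw [PH, him, hnorm]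
  rw [div_div_eq_mul_div, div_one, one_div]
  exact inv_mul_cancel_left₀ hsum _

lemma PH_moeb (g : Matrix (Fin 2) (Fin 2) ℝ) (hdet : g.det = 1) (hd : g 1 1 ≠ 0) :
    PH (moebAct g Complex.I) (moebAct g 0) = (g 1 1) ^ 2 := by
  rw [Matrix.det_fin_two] at hdet
  have := PH_key (g 0 0) (g 0 1) (g 1 0) (g 1 1) hdet hd
  simpa [moebAct] using this

lemma expX (t : ℝ) :
    NormedSpace.exp (t • Xr) = !![Real.exp (t/2), 0; 0, Real.exp (-(t/2))] := by
  have h1 : t • Xr = Matrix.diagonal ![t/2, -(t/2)] := by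
    ext i j
    fin_cases i <;> fin_cases j <;> simp [Xr, Matrix.diagonal] <;> ring
  rw [h1, Matrix.exp_diagonal]
  ext i j
  fin_cases i <;> fin_cases j <;>
    simp [Matrix.diagonal, ← Real.exp_eq_exp_ℝ]

lemma sq_zero_exp {A : Matrix (Fin 2) (Fin 2) ℝ} (h : A * A = 0) :
    NormedSpace.exp A = 1 + A := by
  rw [NormedSpace.exp_eq_tsum (𝕂 := ℝ)]
  show (∑' n : ℕ, ((n.factorial : ℝ))⁻¹ • A ^ n) = 1 + A
  have hpow : ∀ n, 2 ≤ n → A ^ n = 0 := by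
    intro n hn
    calc A ^ n = A ^ 2 * A ^ (n - 2) := by rw [← pow_add]; congr 1; omega
    _ = 0 := by rw [pow_two, h, zero_mul]
  rw [tsum_eq_sum (s := Finset.range 2) (by
    intro n hn
    simp only [Finset.mem_range, not_lt] at hn
    rw [hpow n hn, smul_zero])]
  simp [Finset.sum_range_succ]

lemma expU (t : ℝ) : NormedSpace.exp (t • Umr) = !![1, 0; t, 1] := by
  rw [sq_zero_exp (by ext i j; fin_cases i <;> fin_cases j <;>
    simp [Umr, Matrix.mul_apply, Fin.sum_univ_two])]
  ext i j
  fin_cases i <;> fin_cases j <;> simp [Umr, Matrix.one_apply]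

theorem PhiMinus_flow_derivatives (g : Matrix (Fin 2) (Fin 2) ℝ)
    (hdet : g.det = 1) (hd : g 1 1 ≠ 0) :
    PH (moebAct g Complex.I) (moebAct g 0) = (g 1 1) ^ 2 ∧
    deriv (fun t : ℝ =>
        PH (moebAct (g * NormedSpace.exp (t • Xr)) Complex.I)
           (moebAct (g * NormedSpace.exp (t • Xr)) 0)) 0 = -(g 1 1) ^ 2 ∧
    deriv (fun t : ℝ =>
        PH (moebAct (g * NormedSpace.exp (t • Umr)) Complex.I)
           (moebAct (g * NormedSpace.exp (t • Umr)) 0)) 0 = 0 := by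
  refine ⟨PH_moeb g hdet hd, ?_, ?_⟩
  · have funeq : (fun t : ℝ =>
        PH (moebAct (g * NormedSpace.exp (t • Xr)) Complex.I)
           (moebAct (g * NormedSpace.exp (t • Xr)) 0))
        = fun t : ℝ => (g 1 1) ^ 2 * Real.exp (-t) := by
      funext t
      have hdet' : (g * NormedSpace.exp (t • Xr)).det = 1 := by
        rw [Matrix.det_mul, hdet, one_mul, expX, Matrix.det_fin_two_of]
        rw [mul_zero, sub_zero, ← Real.exp_add]
        norm_num
      have hentry : (g * NormedSpace.exp (t • Xr)) 1 1 = g 1 1 * Real.exp (-(t/2)) := by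
        rw [expX]
        simp [Matrix.mul_apply, Fin.sum_univ_two]
      have hne : (g * NormedSpace.exp (t • Xr)) 1 1 ≠ 0 := by
        rw [hentry]
        exact mul_ne_zero hd (Real.exp_ne_zero _)
      rw [PH_moeb _ hdet' hne, hentry, mul_pow]
      rw [sq (Real.exp _), ← Real.exp_add]
      ring_nf
    rw [funeq]
    have hda : HasDerivAt (fun t : ℝ => (g 1 1) ^ 2 * Real.exp (-t))
        ((g 1 1) ^ 2 * (Real.exp (-(0:ℝ)) * (-1))) 0 :=
      (((hasDerivAt_id (0:ℝ)).neg).exp).const_mul _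
    rw [hda.deriv]
    simp
  · have funeq : (fun t : ℝ =>
        PH (moebAct (g * NormedSpace.exp (t • Umr)) Complex.I)
           (moebAct (g * NormedSpace.exp (t • Umr)) 0))
        = fun _ : ℝ => (g 1 1) ^ 2 := by
      funext t
      have hdet' : (g * NormedSpace.exp (t • Umr)).det = 1 := by
        rw [Matrix.det_mul, hdet, one_mul, expU, Matrix.det_fin_two_of]
        norm_num
      have hentry : (g * NormedSpace.exp (t • Umr)) 1 1 = g 1 1 := by
        rw [expU]
        simp [Matrix.mul_apply, Fin.sum_univ_two]
      have hne : (g * NormedSpace.exp (t • Umr)) 1 1 ≠ 0 := by rw [hentry]; exact hd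
      rw [PH_moeb _ hdet' hne, hentry]
    rw [funeq]
    exact deriv_const _ _
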